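/- Let r, γ, T > 0, let ρ₀ ∈ L^∞(ℝ^d) with ρ₀ ≥ 0 and ‖ρ₀‖_{L^∞} ≤ r, and let ρ ∈ B_{T,γ}(r). Then for every t ∈ [0, T], ‖F(ρ)_t‖_{L^∞} ≤ e^{−t⟨c₂⟩} r [ 1 + (3⟨c₁⟩r / (2(2γ+1)⟨c₂⟩)) ( e^{(2γ+1)⟨c₂⟩t} − 1 ) + (2/(γ+1)) ( e^{(γ+1)⟨c₂⟩t} − 1 ) ]. -/

import Mathlib

open MeasureTheory Set

noncomputable section

/-- Euclidean space `ℝ^d`, modeled as functions `Fin d → ℝ`. -/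
abbrev Rd (d : ℕ) := Fin d → ℝ

/-- The (sup) `L^∞` norm of a function on `ℝ^d`. -/
def linf {d : ℕ} (f : Rd d → ℝ) : ℝ := ⨆ x, |f x|

/-- Membership in `L^∞(ℝ^d)`: measurable and (everywhere) bounded. -/
def MemLinf {d : ℕ} (f : Rd d → ℝ) : Prop := Measurable f ∧ ∃ M : ℝ, ∀ x, |f x| ≤ M

/-- `h(ρ,x) = (1/2) ∬ (c₁(x,y;z)+c₁(y,x;z)) ρ(y) dy dz + ⟨c₂⟩`. -/
def hker {d : ℕ} (c₁ : Rd d → Rd d → Rd d → ℝ) (C2 : ℝ) (ρ : Rd d → ℝ) (x : Rd d) : ℝ :=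
  1/2 * (∫ y, ∫ z, (c₁ x y z + c₁ y x z) * ρ y) + C2

/-- `R₂(ρ,x)`, the positive part of the right-hand side of the kinetic equation. -/
def R2 {d : ℕ} (c₁ : Rd d → Rd d → Rd d → ℝ) (c₂ : Rd d → Rd d → ℝ)
    (φ₁ φ₂ : Rd d → ℝ) (ρ : Rd d → ℝ) (x : Rd d) : ℝ :=
  1/2 * (∫ y, ∫ z, c₁ y z x * Real.exp (-∫ u, φ₁ (x - u) * ρ u) * ρ y * ρ z)
    + 1/2 * (∫ y, ∫ z, (c₁ x y z + c₁ y x z) *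
        (1 - Real.exp (-∫ u, φ₁ (z - u) * ρ u)) * ρ x * ρ y)
    + (∫ y, c₂ y x * Real.exp (-∫ u, φ₂ (x - u) * ρ u) * ρ y)
    + (∫ y, c₂ x y * (1 - Real.exp (-∫ u, φ₂ (y - u) * ρ u)) * ρ x)

/-- The fixed point map `F` given by the right-hand side of the integral equation. -/
def Fmap {d : ℕ} (c₁ : Rd d → Rd d → Rd d → ℝ) (c₂ : Rd d → Rd d → ℝ)
    (φ₁ φ₂ : Rd d → ℝ) (C2 : ℝ) (ρ₀ : Rd d → ℝ) (ρ : ℝ → Rd d → ℝ) (t : ℝ) (x : Rd d) : ℝ :=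
  ρ₀ x * Real.exp (-∫ s in (0:ℝ)..t, hker c₁ C2 (ρ s) x)
    + ∫ s in (0:ℝ)..t, R2 c₁ c₂ φ₁ φ₂ (ρ s) x * Real.exp (-∫ σ in s..t, hker c₁ C2 (ρ σ) x)

/-- The weighted norm `‖ρ‖_{T,γ} = sup_{t∈[0,T]} e^{-γ⟨c₂⟩t} ‖ρ_t‖_{L^∞}`. -/
def normTg {d : ℕ} (T γ C2 : ℝ) (ρ : ℝ → Rd d → ℝ) : ℝ :=
  ⨆ t : Icc (0:ℝ) T, Real.exp (-(γ * C2 * t.1)) * linf (ρ t.1)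

/-- Continuity on `S ⊆ ℝ` of a curve of functions, in the `L^∞` norm. -/
def LinfContOn {d : ℕ} (S : Set ℝ) (ρ : ℝ → Rd d → ℝ) : Prop :=
  ∀ t ∈ S, ∀ ε > 0, ∃ δ > 0, ∀ s ∈ S, |s - t| < δ → linf (fun x => ρ s x - ρ t x) < ε

/-- Membership in the ball `B_{T,γ}(r) ⊆ C([0,T] → L^∞)`. -/
def memB {d : ℕ} (T γ C2 r : ℝ) (ρ : ℝ → Rd d → ℝ) : Prop :=
  LinfContOn (Icc 0 T) ρ ∧ (∀ t ∈ Icc (0:ℝ) T, MemLinf (ρ t)) ∧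
    (∀ t ∈ Icc (0:ℝ) T, ∀ x, 0 ≤ ρ t x) ∧ normTg T γ C2 ρ ≤ r

/-- Differentiability at `t` (within `S ⊆ ℝ`) of a curve, in the `L^∞` norm,
with derivative `g`. -/
def HasLinfDerivWithinAt {d : ℕ} (ρ : ℝ → Rd d → ℝ) (g : Rd d → ℝ) (S : Set ℝ) (t : ℝ) : Prop :=
  ∀ ε > 0, ∃ δ > 0, ∀ s ∈ S, |s - t| < δ →
    linf (fun x => ρ s x - ρ t x - (s - t) * g x) ≤ ε * |s - t|

/-- The right-hand side of the kinetic equation: `−ρ(x) h(ρ,x) + R₂(ρ,x)`. -/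
def kderiv {d : ℕ} (c₁ : Rd d → Rd d → Rd d → ℝ) (c₂ : Rd d → Rd d → ℝ)
    (φ₁ φ₂ : Rd d → ℝ) (C2 : ℝ) (ρ : Rd d → ℝ) : Rd d → ℝ :=
  fun x => -(ρ x) * hker c₁ C2 ρ x + R2 c₁ c₂ φ₁ φ₂ ρ x

/-- `ρ` is a (local) classical solution of the kinetic equation on `[0,T]` with initial
value `ρ₀`: nonnegative and `L^∞`-valued, continuously differentiable in the `L^∞` norm,
and satisfying `d/dt ρ_t = −ρ_t·h(ρ_t,·) + R₂(ρ_t,·)`, `ρ_0 = ρ₀`. -/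
def IsSol {d : ℕ} (c₁ : Rd d → Rd d → Rd d → ℝ) (c₂ : Rd d → Rd d → ℝ)
    (φ₁ φ₂ : Rd d → ℝ) (C2 : ℝ) (ρ₀ : Rd d → ℝ) (T : ℝ) (ρ : ℝ → Rd d → ℝ) : Prop :=
  (∀ t ∈ Icc (0:ℝ) T, MemLinf (ρ t)) ∧ (∀ t ∈ Icc (0:ℝ) T, ∀ x, 0 ≤ ρ t x) ∧
    ρ 0 = ρ₀ ∧
    (∀ t ∈ Icc (0:ℝ) T, HasLinfDerivWithinAt ρ (kderiv c₁ c₂ φ₁ φ₂ C2 (ρ t)) (Icc 0 T) t) ∧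
    LinfContOn (Icc 0 T) (fun t => kderiv c₁ c₂ φ₁ φ₂ C2 (ρ t))

variable {d : ℕ}

lemma linf_nonneg (f : Rd d → ℝ) : 0 ≤ linf f :=
  Real.iSup_nonneg fun x => abs_nonneg _

lemma abs_le_linf {f : Rd d → ℝ} {M : ℝ} (hf : ∀ x, |f x| ≤ M) (x : Rd d) : |f x| ≤ linf f :=
  le_ciSup ⟨M, by rintro v ⟨y, rfl⟩; exact hf y⟩ x

lemma linf_le {f : Rd d → ℝ} {M : ℝ} (h : ∀ x, |f x| ≤ M) : linf f ≤ M :=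
  ciSup_le h

/-- |∫ g·f| ≤ M ∫ g for g ≥ 0 integrable and |f| ≤ M. -/
lemma abs_integral_mul_le {g f : Rd d → ℝ} {M : ℝ} (hg : Integrable g)
    (hgnn : ∀ y, 0 ≤ g y) (hfM : ∀ y, |f y| ≤ M) :
    |∫ y, g y * f y| ≤ M * ∫ y, g y := by
  calc |∫ y, g y * f y| ≤ ∫ y, |g y| * |f y| := by
        simpa [Real.norm_eq_abs] using norm_integral_le_integral_norm (fun y => g y * f y)
    _ ≤ ∫ y, M * g y := by
        refine integral_mono_of_nonneg (ae_of_all _ fun y => mul_nonneg (abs_nonneg _) (abs_nonneg _))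
          (hg.const_mul M) (ae_of_all _ fun y => ?_)
        simp only []
        rw [abs_of_nonneg (hgnn y), mul_comm M (g y)]
        exact mul_le_mul_of_nonneg_left (hfM y) (hgnn y)
    _ = M * ∫ y, g y := integral_const_mul M g

/-- iterated double-integral comparison, no measurability of `f` needed. -/
lemma intint_le (K f : Rd d → Rd d → ℝ) (M : ℝ)
    (hK : Integrable (fun p : Rd d × Rd d => K p.1 p.2))
    (hfnn : ∀ y z, 0 ≤ f y z)
    (hfK : ∀ y z, f y z ≤ M * K y z) :
    (∫ y, ∫ z, f y z) ≤ M * ∫ y, ∫ z, K y z := by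
  have hae : ∀ᵐ y : Rd d, Integrable (fun z => K y z) := hK.prod_right_ae
  have h1 : (∫ y, ∫ z, f y z) ≤ ∫ y, M * ∫ z, K y z := by
    refine integral_mono_of_nonneg
      (ae_of_all _ fun y => integral_nonneg fun z => hfnn y z)
      ((hK.integral_prod_left).const_mul M) ?_
    filter_upwards [hae] with y hy
    calc (∫ z, f y z) ≤ ∫ z, M * K y z :=
          integral_mono_of_nonneg (ae_of_all _ fun z => hfnn y z)
            (hy.const_mul M) (ae_of_all _ fun z => hfK y z)
      _ = M * ∫ z, K y z := integral_const_mul M _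
  rwa [integral_const_mul] at h1

lemma int_le (K f : Rd d → ℝ) (M : ℝ) (hK : Integrable K)
    (hfnn : ∀ y, 0 ≤ f y) (hfK : ∀ y, f y ≤ M * K y) :
    (∫ y, f y) ≤ M * ∫ y, K y := by
  calc (∫ y, f y) ≤ ∫ y, M * K y :=
        integral_mono_of_nonneg (ae_of_all _ hfnn) (hK.const_mul M) (ae_of_all _ hfK)
    _ = M * ∫ y, K y := integral_const_mul M _

lemma exp_int_aux {c : ℝ} (hc : c ≠ 0) (t : ℝ) :
    (∫ s in (0:ℝ)..t, Real.exp (c * s)) = (Real.exp (c * t) - 1) / c := by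
  have : ∀ s ∈ uIcc (0:ℝ) t, HasDerivAt (fun s => Real.exp (c * s) / c) (Real.exp (c * s)) s := by
    intro s _
    have h1 : HasDerivAt (fun s : ℝ => c * s) c s := by
      simpa using (hasDerivAt_id s).const_mul c
    have h2 := (h1.exp).div_const c
    simpa [mul_comm, mul_div_assoc, mul_div_cancel_left₀ _ hc] using h2
  rw [intervalIntegral.integral_eq_sub_of_hasDerivAt this
    ((Real.continuous_exp.comp (continuous_const.mul continuous_id)).intervalIntegrable 0 t)]
  field_simp
  simp

section domain
variable {d : ℕ} {c₁ : Rd d → Rd d → Rd d → ℝ} {C1 C2 : ℝ}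

/-- rewrite `hker` with the inner `z`-integral pulled out. -/
lemma hker_eq (ρf : Rd d → ℝ) (x : Rd d) :
    hker c₁ C2 ρf x = 1/2 * (∫ y, (∫ z, c₁ x y z + c₁ y x z) * ρf y) + C2 := by
  unfold hker
  congr 1
  congr 1
  refine integral_congr_ae (ae_of_all _ fun y => ?_)
  exact integral_mul_const (ρf y) _

lemma hker_ge (ρf : Rd d → ℝ) (hnn : ∀ y, 0 ≤ ρf y) (hc₁nn : ∀ x y z, 0 ≤ c₁ x y z)
    (x : Rd d) : C2 ≤ hker c₁ C2 ρf x := by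
  unfold hker
  have : 0 ≤ ∫ y, ∫ z, (c₁ x y z + c₁ y x z) * ρf y :=
    integral_nonneg fun y => integral_nonneg fun z =>
      mul_nonneg (add_nonneg (hc₁nn _ _ _) (hc₁nn _ _ _)) (hnn y)
  nlinarith

lemma G_int (hc₁int₁₃ : ∀ y, Integrable fun p : Rd d × Rd d => c₁ p.1 y p.2)
    (hc₁int₂₃ : ∀ x, Integrable fun p : Rd d × Rd d => c₁ x p.1 p.2) (x : Rd d) :
    Integrable (fun y => ∫ z, c₁ x y z + c₁ y x z) :=
  ((hc₁int₂₃ x).add (hc₁int₁₃ x)).integral_prod_left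

lemma G_val (hc₁int₁₃ : ∀ y, Integrable fun p : Rd d × Rd d => c₁ p.1 y p.2)
    (hc₁int₂₃ : ∀ x, Integrable fun p : Rd d × Rd d => c₁ x p.1 p.2)
    (hc₁val₁₃ : ∀ y, (∫ x, ∫ z, c₁ x y z) = C1)
    (hc₁val₂₃ : ∀ x, (∫ y, ∫ z, c₁ x y z) = C1) (x : Rd d) :
    (∫ y, ∫ z, c₁ x y z + c₁ y x z) = 2 * C1 := by
  have h1 := integral_integral (f := fun y z => c₁ x y z + c₁ y x z) ((hc₁int₂₃ x).add (hc₁int₁₃ x))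
  have h2 := integral_integral (f := fun y z => c₁ x y z) (hc₁int₂₃ x)
  have h3 := integral_integral (f := fun y z => c₁ y x z) (hc₁int₁₃ x)
  have h4 := integral_add (hc₁int₂₃ x) (hc₁int₁₃ x)
  rw [← Measure.volume_eq_prod] at h1 h2 h3
  rw [h1, h4, ← h2, ← h3, hc₁val₂₃ x, hc₁val₁₃ x]
  ring

lemma G_nonneg (hc₁nn : ∀ x y z, 0 ≤ c₁ x y z) (x y : Rd d) :
    0 ≤ ∫ z, c₁ x y z + c₁ y x z :=
  integral_nonneg fun z => add_nonneg (hc₁nn _ _ _) (hc₁nn _ _ _)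

end domain

section domain2
variable {d : ℕ} {c₁ : Rd d → Rd d → Rd d → ℝ} {C1 C2 : ℝ}

lemma linf_sub_bound {f g : Rd d → ℝ} {Mf Mg : ℝ}
    (hf : ∀ x, |f x| ≤ Mf) (hg : ∀ x, |g x| ≤ Mg) :
    |linf f - linf g| ≤ linf (fun x => f x - g x) := by
  have hfg : ∀ x, |f x - g x| ≤ Mf + Mg := fun x =>
    (abs_sub _ _).trans (add_le_add (hf x) (hg x))
  rw [abs_sub_le_iff]
  constructor
  · have : linf f ≤ linf (fun x => f x - g x) + linf g := by
      refine ciSup_le fun x => ?_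
      calc |f x| ≤ |f x - g x| + |g x| := by
            have := abs_sub_abs_le_abs_sub (f x) (g x); have := abs_add_le (f x - g x) (g x)
            calc |f x| = |(f x - g x) + g x| := by ring_nf
              _ ≤ |f x - g x| + |g x| := abs_add_le _ _
        _ ≤ linf (fun x => f x - g x) + linf g :=
            add_le_add (abs_le_linf hfg x) (abs_le_linf hg x)
    linarith
  · have : linf g ≤ linf (fun x => f x - g x) + linf f := by
      refine ciSup_le fun x => ?_
      calc |g x| = |(g x - f x) + f x| := by ring_nf
        _ ≤ |g x - f x| + |f x| := abs_add_le _ _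
        _ = |f x - g x| + |f x| := by rw [abs_sub_comm]
        _ ≤ linf (fun x => f x - g x) + linf f :=
            add_le_add (abs_le_linf hfg x) (abs_le_linf hf x)
    linarith

lemma hker_sub (hc₁nn : ∀ x y z, 0 ≤ c₁ x y z)
    (hc₁int₁₃ : ∀ y, Integrable fun p : Rd d × Rd d => c₁ p.1 y p.2)
    (hc₁int₂₃ : ∀ x, Integrable fun p : Rd d × Rd d => c₁ x p.1 p.2)
    (hc₁val₁₃ : ∀ y, (∫ x, ∫ z, c₁ x y z) = C1)
    (hc₁val₂₃ : ∀ x, (∫ y, ∫ z, c₁ x y z) = C1)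
    (ρ1 ρ2 : Rd d → ℝ) (h1 : MemLinf ρ1) (h2 : MemLinf ρ2) (x : Rd d) :
    |hker c₁ C2 ρ1 x - hker c₁ C2 ρ2 x| ≤ C1 * linf (fun y => ρ1 y - ρ2 y) := by
  obtain ⟨hm1, M1, hM1⟩ := h1
  obtain ⟨hm2, M2, hM2⟩ := h2
  have hGint := G_int hc₁int₁₃ hc₁int₂₃ x
  have int1 : Integrable fun y => (∫ z, c₁ x y z + c₁ y x z) * ρ1 y := by
    have := hGint.bdd_mul hm1.aestronglyMeasurable (c := M1) (ae_of_all _ (by simpa [Real.norm_eq_abs] using hM1))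
    simpa [mul_comm] using this
  have int2 : Integrable fun y => (∫ z, c₁ x y z + c₁ y x z) * ρ2 y := by
    have := hGint.bdd_mul hm2.aestronglyMeasurable (c := M2) (ae_of_all _ (by simpa [Real.norm_eq_abs] using hM2))
    simpa [mul_comm] using this
  have diff : hker c₁ C2 ρ1 x - hker c₁ C2 ρ2 x
      = 1/2 * ∫ y, (∫ z, c₁ x y z + c₁ y x z) * (ρ1 y - ρ2 y) := by
    rw [hker_eq, hker_eq]
    have : (∫ y, (∫ z, c₁ x y z + c₁ y x z) * ρ1 y)
        - (∫ y, (∫ z, c₁ x y z + c₁ y x z) * ρ2 y)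
        = ∫ y, (∫ z, c₁ x y z + c₁ y x z) * (ρ1 y - ρ2 y) := by
      rw [← integral_sub int1 int2]
      congr 1; funext y; ring
    linarith [this]
  have hdb : ∀ y, |ρ1 y - ρ2 y| ≤ M1 + M2 := fun y =>
    (abs_sub _ _).trans (add_le_add (hM1 y) (hM2 y))
  have hb := abs_integral_mul_le (M := linf fun y => ρ1 y - ρ2 y) hGint (G_nonneg hc₁nn x)
    (fun y => abs_le_linf hdb y)
  rw [diff, abs_mul, abs_of_nonneg (by norm_num : (0:ℝ) ≤ 1/2)]
  rw [G_val hc₁int₁₃ hc₁int₂₃ hc₁val₁₃ hc₁val₂₃ x] at hb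
  linarith

end domain2

section domain3
variable {d : ℕ} {c₁ : Rd d → Rd d → Rd d → ℝ} {c₂ : Rd d → Rd d → ℝ}
  {φ₁ φ₂ : Rd d → ℝ} {C1 C2 : ℝ}

lemma one_sub_exp_mem {a : ℝ} (ha : 0 ≤ a) :
    0 ≤ 1 - Real.exp (-a) ∧ 1 - Real.exp (-a) ≤ 1 := by
  constructor
  · have : Real.exp (-a) ≤ 1 := Real.exp_le_one_iff.mpr (by linarith)
    linarith
  · have := Real.exp_pos (-a); linarith


lemma mul4_le {c E a b M : ℝ} (hc : 0 ≤ c) (hE0 : 0 ≤ E) (hE1 : E ≤ 1)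
    (ha0 : 0 ≤ a) (haM : a ≤ M) (hb0 : 0 ≤ b) (hbM : b ≤ M) :
    c * E * a * b ≤ M ^ 2 * c := by
  have hM : 0 ≤ M := le_trans ha0 haM
  calc c * E * a * b ≤ c * 1 * M * M := by
        apply mul_le_mul (mul_le_mul (mul_le_mul le_rfl hE1 hE0 hc) haM ha0 (by positivity))
          hbM hb0 (by positivity)
    _ = M ^ 2 * c := by ring

lemma mul3_le {c E a M : ℝ} (hc : 0 ≤ c) (hE0 : 0 ≤ E) (hE1 : E ≤ 1)
    (ha0 : 0 ≤ a) (haM : a ≤ M) :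
    c * E * a ≤ M * c := by
  calc c * E * a ≤ c * 1 * M := by
        apply mul_le_mul (mul_le_mul le_rfl hE1 hE0 hc) haM ha0 (by positivity)
    _ = M * c := by ring

lemma R2_nonneg (hc₁nn : ∀ x y z, 0 ≤ c₁ x y z) (hc₂nn : ∀ x y, 0 ≤ c₂ x y)
    (hφ₁nn : ∀ u, 0 ≤ φ₁ u) (hφ₂nn : ∀ u, 0 ≤ φ₂ u)
    (ρf : Rd d → ℝ) (hρnn : ∀ y, 0 ≤ ρf y) (x : Rd d) :
    0 ≤ R2 c₁ c₂ φ₁ φ₂ ρf x := by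
  have hint : ∀ w : Rd d, 0 ≤ ∫ u, φ₁ (w - u) * ρf u := fun w =>
    integral_nonneg fun u => mul_nonneg (hφ₁nn _) (hρnn u)
  have hint2 : ∀ w : Rd d, 0 ≤ ∫ u, φ₂ (w - u) * ρf u := fun w =>
    integral_nonneg fun u => mul_nonneg (hφ₂nn _) (hρnn u)
  unfold R2
  have t1 : 0 ≤ ∫ y, ∫ z, c₁ y z x * Real.exp (-∫ u, φ₁ (x - u) * ρf u) * ρf y * ρf z :=
    integral_nonneg fun y => integral_nonneg fun z =>
      mul_nonneg (mul_nonneg (mul_nonneg (hc₁nn _ _ _) (Real.exp_pos _).le) (hρnn y)) (hρnn z)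
  have t2 : 0 ≤ ∫ y, ∫ z, (c₁ x y z + c₁ y x z) *
      (1 - Real.exp (-∫ u, φ₁ (z - u) * ρf u)) * ρf x * ρf y :=
    integral_nonneg fun y => integral_nonneg fun z =>
      mul_nonneg (mul_nonneg (mul_nonneg (add_nonneg (hc₁nn _ _ _) (hc₁nn _ _ _))
        (one_sub_exp_mem (hint z)).1) (hρnn x)) (hρnn y)
  have t3 : 0 ≤ ∫ y, c₂ y x * Real.exp (-∫ u, φ₂ (x - u) * ρf u) * ρf y :=
    integral_nonneg fun y =>
      mul_nonneg (mul_nonneg (hc₂nn _ _) (Real.exp_pos _).le) (hρnn y)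
  have t4 : 0 ≤ ∫ y, c₂ x y * (1 - Real.exp (-∫ u, φ₂ (y - u) * ρf u)) * ρf x :=
    integral_nonneg fun y =>
      mul_nonneg (mul_nonneg (hc₂nn _ _) (one_sub_exp_mem (hint2 y)).1) (hρnn x)
  nlinarith

lemma R2_le (hc₁nn : ∀ x y z, 0 ≤ c₁ x y z)
    (hc₁int₁₂ : ∀ z, Integrable fun p : Rd d × Rd d => c₁ p.1 p.2 z)
    (hc₁int₁₃ : ∀ y, Integrable fun p : Rd d × Rd d => c₁ p.1 y p.2)
    (hc₁int₂₃ : ∀ x, Integrable fun p : Rd d × Rd d => c₁ x p.1 p.2)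
    (hc₁val₁₂ : ∀ z, (∫ x, ∫ y, c₁ x y z) = C1)
    (hc₁val₁₃ : ∀ y, (∫ x, ∫ z, c₁ x y z) = C1)
    (hc₁val₂₃ : ∀ x, (∫ y, ∫ z, c₁ x y z) = C1)
    (hc₂nn : ∀ x y, 0 ≤ c₂ x y)
    (hc₂int₁ : ∀ y, Integrable fun x => c₂ x y)
    (hc₂int₂ : ∀ x, Integrable fun y => c₂ x y)
    (hc₂val₁ : ∀ y, (∫ x, c₂ x y) = C2)
    (hc₂val₂ : ∀ x, (∫ y, c₂ x y) = C2)
    (hφ₁nn : ∀ u, 0 ≤ φ₁ u) (hφ₂nn : ∀ u, 0 ≤ φ₂ u)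
    (ρf : Rd d → ℝ) (hρnn : ∀ y, 0 ≤ ρf y) {M : ℝ} (hM : 0 ≤ M)
    (hρM : ∀ y, ρf y ≤ M) (x : Rd d) :
    R2 c₁ c₂ φ₁ φ₂ ρf x ≤ 3/2 * C1 * M^2 + 2 * C2 * M := by
  have hint : ∀ w : Rd d, 0 ≤ ∫ u, φ₁ (w - u) * ρf u := fun w =>
    integral_nonneg fun u => mul_nonneg (hφ₁nn _) (hρnn u)
  have hint2 : ∀ w : Rd d, 0 ≤ ∫ u, φ₂ (w - u) * ρf u := fun w =>
    integral_nonneg fun u => mul_nonneg (hφ₂nn _) (hρnn u)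
  have hE1 : Real.exp (-∫ u, φ₁ (x - u) * ρf u) ≤ 1 :=
    Real.exp_le_one_iff.mpr (by linarith [hint x])
  have t1 : (∫ y, ∫ z, c₁ y z x * Real.exp (-∫ u, φ₁ (x - u) * ρf u) * ρf y * ρf z)
      ≤ M^2 * C1 := by
    have := intint_le (fun y z => c₁ y z x)
      (fun y z => c₁ y z x * Real.exp (-∫ u, φ₁ (x - u) * ρf u) * ρf y * ρf z) (M^2)
      (hc₁int₁₂ x)
      (fun y z => mul_nonneg (mul_nonneg (mul_nonneg (hc₁nn _ _ _)
        (Real.exp_pos _).le) (hρnn y)) (hρnn z))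
      (fun y z => by
        exact mul4_le (hc₁nn y z x) (Real.exp_pos _).le hE1 (hρnn y) (hρM y)
          (hρnn z) (hρM z))
    rwa [hc₁val₁₂ x] at this
  have t2 : (∫ y, ∫ z, (c₁ x y z + c₁ y x z) *
      (1 - Real.exp (-∫ u, φ₁ (z - u) * ρf u)) * ρf x * ρf y) ≤ M^2 * (2 * C1) := by
    have := intint_le (fun y z => c₁ x y z + c₁ y x z)
      (fun y z => (c₁ x y z + c₁ y x z) *
        (1 - Real.exp (-∫ u, φ₁ (z - u) * ρf u)) * ρf x * ρf y) (M^2)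
      ((hc₁int₂₃ x).add (hc₁int₁₃ x))
      (fun y z => mul_nonneg (mul_nonneg (mul_nonneg
        (add_nonneg (hc₁nn _ _ _) (hc₁nn _ _ _)) (one_sub_exp_mem (hint z)).1)
        (hρnn x)) (hρnn y))
      (fun y z => by
        obtain ⟨h0, h1⟩ := one_sub_exp_mem (hint z)
        exact mul4_le (add_nonneg (hc₁nn x y z) (hc₁nn y x z)) h0 h1 (hρnn x) (hρM x)
          (hρnn y) (hρM y))
    rwa [G_val hc₁int₁₃ hc₁int₂₃ hc₁val₁₃ hc₁val₂₃ x] at this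
  have t3 : (∫ y, c₂ y x * Real.exp (-∫ u, φ₂ (x - u) * ρf u) * ρf y) ≤ M * C2 := by
    have hE : Real.exp (-∫ u, φ₂ (x - u) * ρf u) ≤ 1 :=
      Real.exp_le_one_iff.mpr (by linarith [hint2 x])
    have := int_le (fun y => c₂ y x)
      (fun y => c₂ y x * Real.exp (-∫ u, φ₂ (x - u) * ρf u) * ρf y) M (hc₂int₁ x)
      (fun y => mul_nonneg (mul_nonneg (hc₂nn _ _) (Real.exp_pos _).le) (hρnn y))
      (fun y => by
        exact mul3_le (hc₂nn y x) (Real.exp_pos _).le hE (hρnn y) (hρM y))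
    rwa [hc₂val₁ x] at this
  have t4 : (∫ y, c₂ x y * (1 - Real.exp (-∫ u, φ₂ (y - u) * ρf u)) * ρf x) ≤ M * C2 := by
    have := int_le (fun y => c₂ x y)
      (fun y => c₂ x y * (1 - Real.exp (-∫ u, φ₂ (y - u) * ρf u)) * ρf x) M (hc₂int₂ x)
      (fun y => mul_nonneg (mul_nonneg (hc₂nn _ _) (one_sub_exp_mem (hint2 y)).1) (hρnn x))
      (fun y => by
        obtain ⟨h0, h1⟩ := one_sub_exp_mem (hint2 y)
        exact mul3_le (hc₂nn x y) h0 h1 (hρnn x) (hρM x))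
    rwa [hc₂val₂ x] at this
  unfold R2
  nlinarith [t1, t2, t3, t4]

end domain3

section domain4
variable {d : ℕ} {c₁ : Rd d → Rd d → Rd d → ℝ} {C1 C2 : ℝ} {T γ r : ℝ} {ρ : ℝ → Rd d → ℝ}

lemma linf_contOn (hcont : LinfContOn (Icc 0 T) ρ)
    (hmem : ∀ t ∈ Icc (0:ℝ) T, MemLinf (ρ t)) :
    ContinuousOn (fun t => linf (ρ t)) (Icc 0 T) := by
  rw [Metric.continuousOn_iff]
  intro b hb ε hε
  obtain ⟨δ, hδ, hδ2⟩ := hcont b hb ε hε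
  refine ⟨δ, hδ, fun a ha hab => ?_⟩
  rw [Real.dist_eq]
  obtain ⟨_, Ma, hMa⟩ := hmem a ha
  obtain ⟨_, Mb, hMb⟩ := hmem b hb
  calc |linf (ρ a) - linf (ρ b)| ≤ linf (fun x => ρ a x - ρ b x) := linf_sub_bound hMa hMb
    _ < ε := hδ2 a ha (by rwa [Real.dist_eq] at hab)

lemma rho_linf_le (hρ : memB T γ C2 r ρ) :
    ∀ s ∈ Icc (0:ℝ) T, linf (ρ s) ≤ r * Real.exp (γ * C2 * s) := by
  obtain ⟨hcont, hmem, hnn, hnorm⟩ := hρ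
  have hgc : ContinuousOn (fun t => Real.exp (-(γ * C2 * t)) * linf (ρ t)) (Icc 0 T) :=
    ((Real.continuous_exp.comp (by continuity)).continuousOn).mul (linf_contOn hcont hmem)
  have hbdd : BddAbove (Set.range fun t : Icc (0:ℝ) T =>
      Real.exp (-(γ * C2 * t.1)) * linf (ρ t.1)) := by
    have := (isCompact_Icc (a := (0:ℝ)) (b := T)).bddAbove_image hgc
    rwa [Set.image_eq_range] at this
  intro s hs
  have h1 : Real.exp (-(γ * C2 * s)) * linf (ρ s) ≤ normTg T γ C2 ρ :=
    le_ciSup hbdd ⟨s, hs⟩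
  have h2 : Real.exp (-(γ * C2 * s)) * linf (ρ s) ≤ r := le_trans h1 hnorm
  have hep := Real.exp_pos (γ * C2 * s)
  have hmul : Real.exp (γ * C2 * s) * Real.exp (-(γ * C2 * s)) = 1 := by
    rw [← Real.exp_add]; simp
  have h3 := mul_le_mul_of_nonneg_left h2 hep.le
  rw [← mul_assoc, hmul, one_mul] at h3
  exact h3.trans_eq (mul_comm _ _)

lemma rho_abs_le (hρ : memB T γ C2 r ρ) :
    ∀ s ∈ Icc (0:ℝ) T, ∀ x, |ρ s x| ≤ r * Real.exp (γ * C2 * s) := by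
  intro s hs x
  obtain ⟨_, M, hM⟩ := hρ.2.1 s hs
  exact (abs_le_linf hM x).trans (rho_linf_le hρ s hs)

lemma hker_contOn (hc₁nn : ∀ x y z, 0 ≤ c₁ x y z)
    (hc₁int₁₃ : ∀ y, Integrable fun p : Rd d × Rd d => c₁ p.1 y p.2)
    (hc₁int₂₃ : ∀ x, Integrable fun p : Rd d × Rd d => c₁ x p.1 p.2)
    (hc₁val₁₃ : ∀ y, (∫ x, ∫ z, c₁ x y z) = C1)
    (hc₁val₂₃ : ∀ x, (∫ y, ∫ z, c₁ x y z) = C1)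
    (hC1 : 0 ≤ C1)
    (hcont : LinfContOn (Icc 0 T) ρ)
    (hmem : ∀ t ∈ Icc (0:ℝ) T, MemLinf (ρ t)) (x : Rd d) :
    ContinuousOn (fun σ => hker c₁ C2 (ρ σ) x) (Icc 0 T) := by
  rw [Metric.continuousOn_iff]
  intro b hb ε hε
  have hε' : 0 < ε / (C1 + 1) := by positivity
  obtain ⟨δ, hδ, hδ2⟩ := hcont b hb _ hε'
  refine ⟨δ, hδ, fun a ha hab => ?_⟩
  rw [Real.dist_eq]
  have hl := hker_sub (C2 := C2) hc₁nn hc₁int₁₃ hc₁int₂₃ hc₁val₁₃ hc₁val₂₃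
    (ρ a) (ρ b) (hmem a ha) (hmem b hb) x
  have h2 := hδ2 a ha (by rwa [Real.dist_eq] at hab)
  have h3 : C1 * linf (fun y => ρ a y - ρ b y) ≤ C1 * (ε / (C1 + 1)) :=
    mul_le_mul_of_nonneg_left h2.le hC1
  have hq : (C1 + 1) * (ε / (C1 + 1)) = ε := by field_simp
  have h4 : C1 * (ε / (C1 + 1)) < ε := by nlinarith [hε']
  calc |hker c₁ C2 (ρ a) x - hker c₁ C2 (ρ b) x|
      ≤ C1 * linf (fun y => ρ a y - ρ b y) := hl
    _ < ε := lt_of_le_of_lt h3 h4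

end domain4

theorem statement12 {d : ℕ} (hd : 1 ≤ d)
    (c₁ : Rd d → Rd d → Rd d → ℝ) (C1 : ℝ)
    (hc₁meas : Measurable fun p : Rd d × Rd d × Rd d => c₁ p.1 p.2.1 p.2.2)
    (hc₁nn : ∀ x y z, 0 ≤ c₁ x y z)
    (hc₁sym : ∀ x y z, c₁ x y z = c₁ y x z)
    (hc₁int₁₂ : ∀ z, Integrable fun p : Rd d × Rd d => c₁ p.1 p.2 z)
    (hc₁int₁₃ : ∀ y, Integrable fun p : Rd d × Rd d => c₁ p.1 y p.2)
    (hc₁int₂₃ : ∀ x, Integrable fun p : Rd d × Rd d => c₁ x p.1 p.2)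
    (hc₁val₁₂ : ∀ z, (∫ x, ∫ y, c₁ x y z) = C1)
    (hc₁val₁₃ : ∀ y, (∫ x, ∫ z, c₁ x y z) = C1)
    (hc₁val₂₃ : ∀ x, (∫ y, ∫ z, c₁ x y z) = C1)
    (c₂ : Rd d → Rd d → ℝ) (C2 : ℝ)
    (hc₂meas : Measurable fun p : Rd d × Rd d => c₂ p.1 p.2)
    (hc₂nn : ∀ x y, 0 ≤ c₂ x y)
    (hc₂int₁ : ∀ y, Integrable fun x => c₂ x y)
    (hc₂int₂ : ∀ x, Integrable fun y => c₂ x y)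
    (hc₂val₁ : ∀ y, (∫ x, c₂ x y) = C2)
    (hc₂val₂ : ∀ x, (∫ y, c₂ x y) = C2)
    (hC2pos : 0 < C2)
    (φ₁ : Rd d → ℝ) (Φ₁ : ℝ) (hφ₁meas : Measurable φ₁) (hφ₁nn : ∀ u, 0 ≤ φ₁ u)
    (hφ₁int : Integrable φ₁) (hφ₁val : (∫ u, φ₁ u) = Φ₁)
    (φ₂ : Rd d → ℝ) (Φ₂ : ℝ) (hφ₂meas : Measurable φ₂) (hφ₂nn : ∀ u, 0 ≤ φ₂ u)
    (hφ₂int : Integrable φ₂) (hφ₂val : (∫ u, φ₂ u) = Φ₂)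
    (r γ T : ℝ) (hr : 0 < r) (hγ : 0 < γ) (hT : 0 < T)
    (ρ₀ : Rd d → ℝ) (hρ₀mem : MemLinf ρ₀) (hρ₀nn : ∀ x, 0 ≤ ρ₀ x)
    (hρ₀r : linf ρ₀ ≤ r)
    (ρ : ℝ → Rd d → ℝ) (hρ : memB T γ C2 r ρ) :
    ∀ t ∈ Icc (0:ℝ) T,
      linf (Fmap c₁ c₂ φ₁ φ₂ C2 ρ₀ ρ t)
        ≤ Real.exp (-(t * C2)) * r *
            (1 + 3 * C1 * r / (2 * (2 * γ + 1) * C2) * (Real.exp ((2 * γ + 1) * C2 * t) - 1)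
              + 2 / (γ + 1) * (Real.exp ((γ + 1) * C2 * t) - 1)) := by

  intro t ht
  obtain ⟨ht0, htT⟩ := ht
  have hC1 : 0 ≤ C1 := by
    rw [← hc₁val₂₃ (fun _ => 0)]
    exact integral_nonneg fun y => integral_nonneg fun z => hc₁nn _ _ _
  obtain ⟨hρcont, hρmem, hρnn, hρnorm⟩ := hρ
  -- pointwise bound on ρ
  have hρle : ∀ s ∈ Icc (0:ℝ) T, ∀ x, ρ s x ≤ r * Real.exp (γ * C2 * s) := fun s hs x =>
    (le_abs_self _).trans (rho_abs_le ⟨hρcont, hρmem, hρnn, hρnorm⟩ s hs x)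
  -- exponential weight bound
  have hexp : ∀ x : Rd d, ∀ s ∈ Icc (0:ℝ) t,
      Real.exp (-∫ σ in s..t, hker c₁ C2 (ρ σ) x) ≤ Real.exp (-((t - s) * C2)) := by
    intro x s hs
    rw [Real.exp_le_exp, neg_le_neg_iff]
    have hsub : uIcc s t ⊆ Icc 0 T := by
      rw [uIcc_of_le hs.2]
      exact fun σ hσ => ⟨le_trans hs.1 hσ.1, le_trans hσ.2 htT⟩
    have hint : IntervalIntegrable (fun σ => hker c₁ C2 (ρ σ) x) volume s t :=
      ((hker_contOn hc₁nn hc₁int₁₃ hc₁int₂₃ hc₁val₁₃ hc₁val₂₃ hC1 hρcont hρmem x).mono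
        hsub).intervalIntegrable
    have hconst : ((t - s) * C2) = ∫ _ in s..t, C2 := by
      rw [intervalIntegral.integral_const, smul_eq_mul]
    rw [hconst]
    refine intervalIntegral.integral_mono_on hs.2 (intervalIntegrable_const) hint fun σ hσ => ?_
    exact hker_ge (ρ σ) (fun y => hρnn σ ⟨le_trans hs.1 hσ.1, le_trans hσ.2 htT⟩ y) hc₁nn x
  -- pointwise bound on Fmap
  have hFnn : ∀ x, 0 ≤ Fmap c₁ c₂ φ₁ φ₂ C2 ρ₀ ρ t x := by
    intro x
    unfold Fmap
    have h1 : 0 ≤ ρ₀ x * Real.exp (-∫ s in (0:ℝ)..t, hker c₁ C2 (ρ s) x) :=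
      mul_nonneg (hρ₀nn x) (Real.exp_pos _).le
    have h2 : 0 ≤ ∫ s in (0:ℝ)..t,
        R2 c₁ c₂ φ₁ φ₂ (ρ s) x * Real.exp (-∫ σ in s..t, hker c₁ C2 (ρ σ) x) := by
      refine intervalIntegral.integral_nonneg ht0 fun s hs => mul_nonneg ?_ (Real.exp_pos _).le
      exact R2_nonneg hc₁nn hc₂nn hφ₁nn hφ₂nn (ρ s)
        (fun y => hρnn s ⟨hs.1, le_trans hs.2 htT⟩ y) x
    linarith
  -- the dominating integrand
  set g : ℝ → ℝ := fun s => (3/2 * C1 * (r * Real.exp (γ * C2 * s))^2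
      + 2 * C2 * (r * Real.exp (γ * C2 * s))) * Real.exp (-((t - s) * C2)) with hg
  have hgcont : Continuous g := by
    unfold g
    fun_prop
  have hgnn : ∀ s, 0 ≤ g s := fun s => by unfold g; positivity
  -- bound the time integral term
  have hIb : ∀ x, (∫ s in (0:ℝ)..t,
      R2 c₁ c₂ φ₁ φ₂ (ρ s) x * Real.exp (-∫ σ in s..t, hker c₁ C2 (ρ σ) x))
      ≤ ∫ s in (0:ℝ)..t, g s := by
    intro x
    by_cases hii : IntervalIntegrable (fun s =>
        R2 c₁ c₂ φ₁ φ₂ (ρ s) x * Real.exp (-∫ σ in s..t, hker c₁ C2 (ρ σ) x)) volume 0 t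
    · refine intervalIntegral.integral_mono_on ht0 hii (hgcont.intervalIntegrable 0 t)
        fun s hs => ?_
      have hsT : s ∈ Icc (0:ℝ) T := ⟨hs.1, le_trans hs.2 htT⟩
      have hM : (0:ℝ) ≤ r * Real.exp (γ * C2 * s) := by positivity
      have hR := R2_le hc₁nn hc₁int₁₂ hc₁int₁₃ hc₁int₂₃ hc₁val₁₂ hc₁val₁₃ hc₁val₂₃
        hc₂nn hc₂int₁ hc₂int₂ hc₂val₁ hc₂val₂ hφ₁nn hφ₂nn (ρ s)
        (fun y => hρnn s hsT y) hM (fun y => hρle s hsT y) x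
      have hE := hexp x s hs
      have hRnn := R2_nonneg hc₁nn hc₂nn hφ₁nn hφ₂nn (ρ s) (fun y => hρnn s hsT y) x
      unfold g
      exact mul_le_mul hR hE (Real.exp_pos _).le (by positivity)
    · rw [intervalIntegral.integral_undef hii]
      exact intervalIntegral.integral_nonneg ht0 fun s _ => hgnn s
  -- compute the dominating integral
  have hc1ne : (2 * γ + 1) * C2 ≠ 0 := by positivity
  have hc2ne : (γ + 1) * C2 ≠ 0 := by positivity
  have hgval : (∫ s in (0:ℝ)..t, g s)
      = Real.exp (-(t * C2)) * (3/2 * C1 * r^2 * ((Real.exp ((2*γ+1)*C2*t) - 1) / ((2*γ+1)*C2))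
        + 2 * C2 * r * ((Real.exp ((γ+1)*C2*t) - 1) / ((γ+1)*C2))) := by
    have hgeq : Set.EqOn g (fun s => Real.exp (-(t * C2)) *
        (3/2 * C1 * r^2 * Real.exp ((2*γ+1)*C2*s) + 2 * C2 * r * Real.exp ((γ+1)*C2*s)))
        (uIcc 0 t) := by
      intro s _
      unfold g
      simp only
      have h1 : Real.exp (γ*C2*s) ^ 2 = Real.exp (2*γ*C2*s) := by
        rw [sq, ← Real.exp_add]; congr 1; ring
      have h2 : Real.exp (2*γ*C2*s) * Real.exp (-((t-s)*C2))
          = Real.exp (-(t*C2)) * Real.exp ((2*γ+1)*C2*s) := by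
        rw [← Real.exp_add, ← Real.exp_add]; congr 1; ring
      have h3 : Real.exp (γ*C2*s) * Real.exp (-((t-s)*C2))
          = Real.exp (-(t*C2)) * Real.exp ((γ+1)*C2*s) := by
        rw [← Real.exp_add, ← Real.exp_add]; congr 1; ring
      linear_combination (3/2 * C1 * r^2 * Real.exp (-((t-s)*C2))) * h1
        + (3/2 * C1 * r^2) * h2 + (2 * C2 * r) * h3
    rw [intervalIntegral.integral_congr hgeq]
    have i1 : IntervalIntegrable (fun s => 3/2 * C1 * r^2 * Real.exp ((2*γ+1)*C2*s))
        volume 0 t :=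
      (continuous_const.mul ((continuous_const.mul continuous_id).rexp)).intervalIntegrable 0 t
    have i2 : IntervalIntegrable (fun s => 2 * C2 * r * Real.exp ((γ+1)*C2*s))
        volume 0 t :=
      (continuous_const.mul ((continuous_const.mul continuous_id).rexp)).intervalIntegrable 0 t
    rw [intervalIntegral.integral_const_mul, intervalIntegral.integral_add i1 i2,
      intervalIntegral.integral_const_mul, intervalIntegral.integral_const_mul,
      exp_int_aux hc1ne, exp_int_aux hc2ne]
  -- combine
  have hfirst : ∀ x, ρ₀ x * Real.exp (-∫ s in (0:ℝ)..t, hker c₁ C2 (ρ s) x)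
      ≤ r * Real.exp (-(t * C2)) := by
    intro x
    have hx : ρ₀ x ≤ r := (le_abs_self _).trans ((abs_le_linf hρ₀mem.2.choose_spec x).trans hρ₀r)
    have hE : Real.exp (-∫ s in (0:ℝ)..t, hker c₁ C2 (ρ s) x) ≤ Real.exp (-(t * C2)) := by
      have := hexp x 0 ⟨le_rfl, ht0⟩
      simpa using this
    exact mul_le_mul hx hE (Real.exp_pos _).le hr.le
  refine linf_le fun x => ?_
  rw [abs_of_nonneg (hFnn x)]
  have hbound : Fmap c₁ c₂ φ₁ φ₂ C2 ρ₀ ρ t x ≤ r * Real.exp (-(t * C2))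
      + Real.exp (-(t * C2)) * (3/2 * C1 * r^2 * ((Real.exp ((2*γ+1)*C2*t) - 1) / ((2*γ+1)*C2))
        + 2 * C2 * r * ((Real.exp ((γ+1)*C2*t) - 1) / ((γ+1)*C2))) := by
    unfold Fmap
    have := hIb x
    rw [hgval] at this
    linarith [hfirst x]
  refine hbound.trans (le_of_eq ?_)
  have hγ1 : γ + 1 ≠ 0 := by positivity
  have h2γ : 2 * γ + 1 ≠ 0 := by positivity
  field_simp
  ring
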